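/- Let X = ℝ^d, fix a norm ‖·‖ on ℝ^d, let Q be a finitely supported probability measure with distinct support points, let G_t = (supp(Q), E) be any t-spanner over supp(Q) (t ≥ 1), and let G_1 = (supp(Q), {(x_i, x_l) ∈ supp(Q)² : x_i ≠ x_l}) be the complete graph. Then S(Q, T_P, G_‖·‖(G_1)) ≤ S(Q, T_P, G_‖·‖(G_t)) ≤ 2t² · S(Q, T_P, G_‖·‖(G_1)). -/

import Mathlib

open MeasureTheory Filter Finset

noncomputable section

namespace Stein

variable {d : ℕ}

/-- `N` is a norm on `ℝ^d` (represented as a real-valued function on `Fin d → ℝ`). -/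
def IsNorm (N : (Fin d → ℝ) → ℝ) : Prop :=
  (∀ v, 0 ≤ N v) ∧ (∀ v, N v = 0 ↔ v = 0) ∧
    (∀ (c : ℝ) (v), N (c • v) = |c| * N v) ∧ (∀ v w, N (v + w) ≤ N v + N w)

/-- The dual norm `‖w‖* = sup {⟨w, v⟩ : N v = 1}` on vectors. -/
def dualVec (N : (Fin d → ℝ) → ℝ) (w : Fin d → ℝ) : ℝ :=
  sSup {r | ∃ v : Fin d → ℝ, N v = 1 ∧ r = ∑ i, w i * v i}

/-- Matrix-vector multiplication. -/
def matVec (M : Fin d → Fin d → ℝ) (v : Fin d → ℝ) : Fin d → ℝ :=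
  fun j => ∑ k, M j k * v k

/-- The dual norm `‖M‖* = sup {‖M v‖* : N v = 1}` on matrices. -/
def dualMat (N : (Fin d → ℝ) → ℝ) (M : Fin d → Fin d → ℝ) : ℝ :=
  sSup {r | ∃ v : Fin d → ℝ, N v = 1 ∧ r = dualVec N (matVec M v)}

/-- The gradient of a scalar function, as a vector of partial derivatives. -/
def gradv (f : (Fin d → ℝ) → ℝ) (x : Fin d → ℝ) : Fin d → ℝ :=
  fun j => fderiv ℝ f x (Pi.single j 1)

/-- `∇ log p`. -/
def gradLog (p : (Fin d → ℝ) → ℝ) (x : Fin d → ℝ) : Fin d → ℝ :=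
  gradv (fun y => Real.log (p y)) x

/-- The gradient matrix `(∇g(x))_{jk} = ∂_k g_j(x)` of a vector-valued function. -/
def gradMat (g : (Fin d → ℝ) → Fin d → ℝ) (x : Fin d → ℝ) : Fin d → Fin d → ℝ :=
  fun j k => fderiv ℝ (fun y => g y j) x (Pi.single k 1)

/-- The Langevin Stein operator `(T_P g)(x) = ⟨g(x), ∇log p(x)⟩ + ∑_j ∂_j g_j(x)`. -/
def steinOp (p : (Fin d → ℝ) → ℝ) (g : (Fin d → ℝ) → Fin d → ℝ) (x : Fin d → ℝ) : ℝ :=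
  (∑ j, g x j * gradLog p x j) + ∑ j, gradMat g x j j

/-- `n` is an outward unit normal vector to `X` at the boundary point `x`. -/
def isOutwardNormal (X : Set (Fin d → ℝ)) (x n : Fin d → ℝ) : Prop :=
  x ∈ frontier X ∧ (∑ i, n i * n i) = 1 ∧ ∀ y ∈ X, (∑ i, n i * (y i - x i)) ≤ 0

/-- The (non-uniform) classical Stein set `G^{c1:3}_‖·‖`; the classical Stein set is
`steinSet N X 1 1 1`.  The boundary condition `⟨g(x), n(x)⟩ = 0` is imposed at every
boundary point at which the outward unit normal is defined (i.e. unique). -/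
def steinSet (N : (Fin d → ℝ) → ℝ) (X : Set (Fin d → ℝ)) (c1 c2 c3 : ℝ) :
    Set ((Fin d → ℝ) → Fin d → ℝ) :=
  {g | (∀ x ∈ X, DifferentiableAt ℝ g x) ∧
       (∀ x ∈ X, DifferentiableAt ℝ (fun y => gradMat g y) x) ∧
       (∀ x ∈ X, dualVec N (g x) ≤ c1) ∧
       (∀ x ∈ X, dualMat N (gradMat g x) ≤ c2) ∧
       (∀ x ∈ X, ∀ y ∈ X, dualMat N (gradMat g x - gradMat g y) ≤ c3 * N (x - y)) ∧
       (∀ x n, isOutwardNormal X x n → (∃! m, isOutwardNormal X x m) →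
          (∑ i, g x i * n i) = 0)}

/-- The Stein discrepancy of a finitely supported measure with support `S` and
mass function `q`, over the function class `G`. -/
def steinDiscr (N : (Fin d → ℝ) → ℝ) (p : (Fin d → ℝ) → ℝ)
    (S : Finset (Fin d → ℝ)) (q : (Fin d → ℝ) → ℝ)
    (G : Set ((Fin d → ℝ) → Fin d → ℝ)) : ℝ :=
  sSup {r | ∃ g ∈ G, r = |∑ x ∈ S, q x * steinOp p g x|}

/-- The graph Stein set `G_‖·‖(G)` for a graph with vertex set `V` and edge set `E`. -/
def graphSteinSet {d : ℕ} (N : (Fin d → ℝ) → ℝ) (V : Finset (Fin d → ℝ))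
    (E : Set ((Fin d → ℝ) × (Fin d → ℝ))) : Set ((Fin d → ℝ) → Fin d → ℝ) :=
  {g | (∀ x, DifferentiableAt ℝ g x) ∧
       (∀ x ∈ V, dualVec N (g x) ≤ 1 ∧ dualMat N (gradMat g x) ≤ 1) ∧
       (∀ e ∈ E,
          dualVec N (g e.1 - g e.2) ≤ N (e.1 - e.2) ∧
          dualMat N (gradMat g e.1 - gradMat g e.2) ≤ N (e.1 - e.2) ∧
          dualVec N (g e.1 - g e.2 - matVec (gradMat g e.1) (e.1 - e.2)) ≤
            (1 / 2) * N (e.1 - e.2) ^ 2 ∧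
          dualVec N (g e.1 - g e.2 - matVec (gradMat g e.2) (e.1 - e.2)) ≤
            (1 / 2) * N (e.1 - e.2) ^ 2)}

/-- `(V, E)` is a `t`-spanner: each edge joins vertices of `V`, and every pair of distinct
vertices is joined by an edge path of total length at most `t` times their distance. -/
def IsSpanner {d : ℕ} (N : (Fin d → ℝ) → ℝ) (V : Finset (Fin d → ℝ))
    (E : Set ((Fin d → ℝ) × (Fin d → ℝ))) (t : ℝ) : Prop :=
  (∀ e ∈ E, e.1 ∈ V ∧ e.2 ∈ V) ∧
    ∀ x ∈ V, ∀ y ∈ V, x ≠ y →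
      ∃ (L : ℕ) (z : ℕ → Fin d → ℝ), z 0 = x ∧ z L = y ∧
        (∀ l < L, (z l, z (l + 1)) ∈ E) ∧
        (∑ l ∈ Finset.range L, N (z l - z (l + 1))) ≤ t * N (x - y)

section Aux

variable {d : ℕ} {N : (Fin d → ℝ) → ℝ}

lemma norm_zero' (hN : IsNorm N) : N (0 : Fin d → ℝ) = 0 := by
  have h := hN.2.2.1 0 0
  simpa using h

lemma norm_neg' (hN : IsNorm N) (v : Fin d → ℝ) : N (-v) = N v := by
  have h := hN.2.2.1 (-1) v
  simpa using h

lemma norm_sub_rev' (hN : IsNorm N) (x y : Fin d → ℝ) : N (x - y) = N (y - x) := by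
  rw [← norm_neg' hN, neg_sub]

lemma norm_finset_sum_le (hN : IsNorm N) {ι : Type*} (s : Finset ι) (f : ι → Fin d → ℝ) :
    N (∑ i ∈ s, f i) ≤ ∑ i ∈ s, N (f i) := by
  classical
  induction s using Finset.induction with
  | empty => simp [norm_zero' hN]
  | insert _ _ hx ih =>
      rw [Finset.sum_insert hx, Finset.sum_insert hx]
      exact le_trans (hN.2.2.2 _ _) (by linarith)

lemma exists_component_bound (hN : IsNorm N) :
    ∃ C : ℝ, 0 ≤ C ∧ ∀ (v : Fin d → ℝ) (i : Fin d), |v i| ≤ C * N v := by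
  rcases isEmpty_or_nonempty (Fin d) with h | h
  · exact ⟨0, le_refl _, fun v i => (h.false i).elim⟩
  · set K : ℝ := ∑ i, N (Pi.single i 1) with hK
    have hK0 : 0 ≤ K := Finset.sum_nonneg fun i _ => hN.1 _
    have hNle : ∀ v : Fin d → ℝ, N v ≤ K * ‖v‖ := by
      intro v
      have hv : v = ∑ i, (v i) • (Pi.single i 1 : Fin d → ℝ) := by
        funext j
        simp [Finset.sum_apply, Pi.single_apply]
      calc N v = N (∑ i, (v i) • (Pi.single i 1 : Fin d → ℝ)) := by rw [← hv]
        _ ≤ ∑ i, N ((v i) • (Pi.single i 1 : Fin d → ℝ)) := norm_finset_sum_le hN _ _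
        _ = ∑ i, |v i| * N (Pi.single i 1) := by
            exact Finset.sum_congr rfl fun i _ => hN.2.2.1 _ _
        _ ≤ ∑ i, ‖v‖ * N (Pi.single i 1) := by
            refine Finset.sum_le_sum fun i _ => ?_
            have h1 : |v i| ≤ ‖v‖ := by
              simpa [Real.norm_eq_abs] using norm_le_pi_norm v i
            exact mul_le_mul_of_nonneg_right h1 (hN.1 _)
        _ = K * ‖v‖ := by rw [← Finset.mul_sum, hK]; ring
    have hlip : ∀ x y : Fin d → ℝ, |N x - N y| ≤ K * ‖x - y‖ := by
      intro x y
      rw [abs_sub_le_iff]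
      constructor
      · have h1 : N x ≤ N y + N (x - y) := by
          have := hN.2.2.2 y (x - y); simpa using this
        have := hNle (x - y); linarith
      · have h1 : N y ≤ N x + N (y - x) := by
          have := hN.2.2.2 x (y - x); simpa using this
        have h2 := hNle (y - x)
        rw [norm_sub_rev] at h2
        linarith
    have hcont : Continuous N := by
      refine (LipschitzWith.of_dist_le_mul (K := ⟨K, hK0⟩) (f := N) ?_).continuous
      intro x y
      rw [Real.dist_eq, dist_eq_norm]
      exact hlip x y
    have hx₀ : (fun _ : Fin d => (1:ℝ)) ∈ Metric.sphere (0 : Fin d → ℝ) 1 := by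
      rw [mem_sphere_zero_iff_norm]
      simp [pi_norm_const]
    obtain ⟨v₀, hv₀mem, hmin'⟩ :=
      (isCompact_sphere (0 : Fin d → ℝ) 1).exists_isMinOn ⟨_, hx₀⟩ hcont.continuousOn
    have hmin := isMinOn_iff.mp hmin'
    have hv₀norm : ‖v₀‖ = 1 := mem_sphere_zero_iff_norm.mp hv₀mem
    have hv₀ne : v₀ ≠ 0 := by
      intro h; rw [h] at hv₀norm; simp at hv₀norm
    have hc : 0 < N v₀ := by
      rcases lt_or_eq_of_le (hN.1 v₀) with h | h
      · exact h
      · exact absurd ((hN.2.1 v₀).mp h.symm) hv₀ne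
    have key : ∀ v : Fin d → ℝ, N v₀ * ‖v‖ ≤ N v := by
      intro v
      by_cases hv : v = 0
      · simp [hv, norm_zero' hN]
      · have hnv : (0:ℝ) < ‖v‖ := norm_pos_iff.mpr hv
        have hu : ‖v‖⁻¹ • v ∈ Metric.sphere (0 : Fin d → ℝ) 1 := by
          rw [mem_sphere_zero_iff_norm, norm_smul, norm_inv, norm_norm]
          field_simp
        have h1 := hmin _ hu
        have h2 : N (‖v‖⁻¹ • v) = ‖v‖⁻¹ * N v := by
          rw [hN.2.2.1, abs_of_pos (inv_pos.mpr hnv)]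
        rw [h2] at h1
        have := mul_le_mul_of_nonneg_left h1 hnv.le
        rw [mul_comm (N v₀) ‖v‖]
        calc ‖v‖ * N v₀ ≤ ‖v‖ * (‖v‖⁻¹ * N v) := by nlinarith
          _ = N v := by field_simp
    refine ⟨(N v₀)⁻¹, inv_nonneg.mpr hc.le, fun v i => ?_⟩
    have h1 : |v i| ≤ ‖v‖ := by
      simpa [Real.norm_eq_abs] using norm_le_pi_norm v i
    have h2 := key v
    rw [inv_mul_eq_div, le_div_iff₀ hc, mul_comm]
    nlinarith

lemma exists_unit (hN : IsNorm N) [Nonempty (Fin d)] : ∃ v : Fin d → ℝ, N v = 1 := by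
  have hvne : (fun _ : Fin d => (1:ℝ)) ≠ 0 := by
    intro h
    have := congrFun h (Classical.arbitrary _)
    simp at this
  set v : Fin d → ℝ := fun _ => 1
  have hc : 0 < N v := by
    rcases lt_or_eq_of_le (hN.1 v) with h | h
    · exact h
    · exact absurd ((hN.2.1 v).mp h.symm) hvne
  refine ⟨(N v)⁻¹ • v, ?_⟩
  rw [hN.2.2.1, abs_of_pos (inv_pos.mpr hc)]
  field_simp

end Aux
section Dual

variable {d : ℕ} {N : (Fin d → ℝ) → ℝ}

lemma dualVec_bddAbove (hN : IsNorm N) (w : Fin d → ℝ) :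
    BddAbove {r | ∃ v : Fin d → ℝ, N v = 1 ∧ r = ∑ i, w i * v i} := by
  obtain ⟨C, hC0, hC⟩ := exists_component_bound hN
  refine ⟨∑ i, |w i| * C, ?_⟩
  rintro r ⟨v, hv, rfl⟩
  refine Finset.sum_le_sum fun i _ => ?_
  have h1 : |v i| ≤ C := by simpa [hv] using hC v i
  calc w i * v i ≤ |w i * v i| := le_abs_self _
    _ = |w i| * |v i| := abs_mul _ _
    _ ≤ |w i| * C := mul_le_mul_of_nonneg_left h1 (abs_nonneg _)

lemma le_dualVec (hN : IsNorm N) {v : Fin d → ℝ} (hv : N v = 1) (w : Fin d → ℝ) :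
    ∑ i, w i * v i ≤ dualVec N w :=
  le_csSup (dualVec_bddAbove hN w) ⟨v, hv, rfl⟩

lemma dualVec_le (hu : ∃ v : Fin d → ℝ, N v = 1) {w : Fin d → ℝ} {B : ℝ}
    (h : ∀ v : Fin d → ℝ, N v = 1 → ∑ i, w i * v i ≤ B) : dualVec N w ≤ B := by
  obtain ⟨v, hv⟩ := hu
  exact csSup_le ⟨_, v, hv, rfl⟩ (by rintro r ⟨v, hv, rfl⟩; exact h v hv)

lemma dualVec_nonneg (hN : IsNorm N) (hu : ∃ v : Fin d → ℝ, N v = 1) (w : Fin d → ℝ) :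
    0 ≤ dualVec N w := by
  obtain ⟨v, hv⟩ := hu
  have h1 := le_dualVec hN hv w
  have hv' : N (-v) = 1 := by rw [norm_neg' hN]; exact hv
  have h2 := le_dualVec hN hv' w
  have h3 : ∑ i, w i * (-v) i = -∑ i, w i * v i := by
    simp [← Finset.sum_neg_distrib]
  rw [h3] at h2
  linarith

lemma dualVec_zero (hN : IsNorm N) (hu : ∃ v : Fin d → ℝ, N v = 1) :
    dualVec N (0 : Fin d → ℝ) = 0 := by
  refine le_antisymm (dualVec_le hu fun v hv => by simp) (dualVec_nonneg hN hu 0)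

lemma inner_le_dualVec (hN : IsNorm N) (w v : Fin d → ℝ) :
    ∑ i, w i * v i ≤ dualVec N w * N v := by
  by_cases hv : v = 0
  · simp [hv, norm_zero' hN]
  · have hNv : 0 < N v := by
      rcases lt_or_eq_of_le (hN.1 v) with h | h
      · exact h
      · exact absurd ((hN.2.1 v).mp h.symm) hv
    have hu1 : N ((N v)⁻¹ • v) = 1 := by
      rw [hN.2.2.1, abs_of_pos (inv_pos.mpr hNv)]; field_simp
    have h1 := le_dualVec hN hu1 w
    have h2 : ∑ i, w i * ((N v)⁻¹ • v) i = (N v)⁻¹ * ∑ i, w i * v i := by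
      rw [Finset.mul_sum]
      exact Finset.sum_congr rfl fun i _ => by simp [Pi.smul_apply, smul_eq_mul]; ring
    rw [h2] at h1
    have h3 := mul_le_mul_of_nonneg_left h1 hNv.le
    calc ∑ i, w i * v i = N v * ((N v)⁻¹ * ∑ i, w i * v i) := by field_simp
      _ ≤ N v * dualVec N w := h3
      _ = dualVec N w * N v := mul_comm _ _

lemma abs_inner_le_dualVec (hN : IsNorm N) (w v : Fin d → ℝ) :
    |∑ i, w i * v i| ≤ dualVec N w * N v := by
  rw [abs_le]
  constructor
  · have h1 := inner_le_dualVec hN w (-v)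
    have h2 : ∑ i, w i * (-v) i = -∑ i, w i * v i := by simp [← Finset.sum_neg_distrib]
    rw [h2, norm_neg' hN] at h1
    linarith
  · exact inner_le_dualVec hN w v

lemma dualVec_smul_le (hN : IsNorm N) (hu : ∃ v : Fin d → ℝ, N v = 1) {c : ℝ} (hc : 0 ≤ c)
    (w : Fin d → ℝ) : dualVec N (c • w) ≤ c * dualVec N w := by
  refine dualVec_le hu fun v hv => ?_
  have h1 : ∑ i, (c • w) i * v i = c * ∑ i, w i * v i := by
    rw [Finset.mul_sum]
    exact Finset.sum_congr rfl fun i _ => by simp [Pi.smul_apply, smul_eq_mul]; ring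
  rw [h1]
  exact mul_le_mul_of_nonneg_left (le_dualVec hN hv w) hc

lemma dualVec_smul (hN : IsNorm N) (hu : ∃ v : Fin d → ℝ, N v = 1) {c : ℝ} (hc : 0 < c)
    (w : Fin d → ℝ) : dualVec N (c • w) = c * dualVec N w := by
  refine le_antisymm (dualVec_smul_le hN hu hc.le w) ?_
  have h1 := dualVec_smul_le hN hu (inv_nonneg.mpr hc.le) (c • w)
  rw [smul_smul, inv_mul_cancel₀ hc.ne', one_smul] at h1
  calc c * dualVec N w ≤ c * (c⁻¹ * dualVec N (c • w)) :=
        mul_le_mul_of_nonneg_left h1 hc.le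
    _ = dualVec N (c • w) := by field_simp

lemma dualVec_neg (hN : IsNorm N) (hu : ∃ v : Fin d → ℝ, N v = 1) (w : Fin d → ℝ) :
    dualVec N (-w) = dualVec N w := by
  have key : ∀ u : Fin d → ℝ, dualVec N (-u) ≤ dualVec N u := by
    intro u
    refine dualVec_le hu fun v hv => ?_
    have hv' : N (-v) = 1 := by rw [norm_neg' hN]; exact hv
    have := le_dualVec hN hv' u
    have h2 : ∑ i, u i * (-v) i = ∑ i, (-u) i * v i := by
      exact Finset.sum_congr rfl fun i _ => by simp
    rw [h2] at this
    exact this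
  refine le_antisymm (key w) ?_
  have := key (-w)
  rwa [neg_neg] at this

lemma dualVec_add_le (hN : IsNorm N) (hu : ∃ v : Fin d → ℝ, N v = 1) (w₁ w₂ : Fin d → ℝ) :
    dualVec N (w₁ + w₂) ≤ dualVec N w₁ + dualVec N w₂ := by
  refine dualVec_le hu fun v hv => ?_
  have h1 : ∑ i, (w₁ + w₂) i * v i = (∑ i, w₁ i * v i) + ∑ i, w₂ i * v i := by
    rw [← Finset.sum_add_distrib]
    exact Finset.sum_congr rfl fun i _ => by simp [Pi.add_apply]; ring
  rw [h1]
  exact add_le_add (le_dualVec hN hv w₁) (le_dualVec hN hv w₂)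

lemma dualVec_sum_le (hN : IsNorm N) (hu : ∃ v : Fin d → ℝ, N v = 1)
    (f : ℕ → Fin d → ℝ) (n : ℕ) :
    dualVec N (∑ l ∈ Finset.range n, f l) ≤ ∑ l ∈ Finset.range n, dualVec N (f l) := by
  induction n with
  | zero => simp [dualVec_zero hN hu]
  | succ n ih =>
      rw [Finset.sum_range_succ, Finset.sum_range_succ]
      exact le_trans (dualVec_add_le hN hu _ _) (by linarith)

end Dual
section MatVec

variable {d : ℕ} {N : (Fin d → ℝ) → ℝ}

lemma matVec_zero_mat (v : Fin d → ℝ) : matVec (0 : Fin d → Fin d → ℝ) v = 0 := by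
  funext j; simp [matVec]

lemma matVec_zero_vec (M : Fin d → Fin d → ℝ) : matVec M 0 = 0 := by
  funext j; simp [matVec]

lemma matVec_sub_mat (M M' : Fin d → Fin d → ℝ) (v : Fin d → ℝ) :
    matVec (M - M') v = matVec M v - matVec M' v := by
  funext j
  simp [matVec, sub_mul, Finset.sum_sub_distrib]

lemma matVec_neg_mat (M : Fin d → Fin d → ℝ) (v : Fin d → ℝ) :
    matVec (-M) v = -matVec M v := by
  funext j; simp [matVec]

lemma matVec_smul_mat (c : ℝ) (M : Fin d → Fin d → ℝ) (v : Fin d → ℝ) :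
    matVec (c • M) v = c • matVec M v := by
  funext j
  simp [matVec, Finset.mul_sum, mul_assoc]

lemma matVec_smul_vec (M : Fin d → Fin d → ℝ) (c : ℝ) (v : Fin d → ℝ) :
    matVec M (c • v) = c • matVec M v := by
  funext j
  simp [matVec, Finset.mul_sum]
  exact Finset.sum_congr rfl fun k _ => by ring

lemma matVec_sub_vec (M : Fin d → Fin d → ℝ) (v w : Fin d → ℝ) :
    matVec M (v - w) = matVec M v - matVec M w := by
  funext j
  simp [matVec, mul_sub, Finset.sum_sub_distrib]

lemma matVec_neg_vec (M : Fin d → Fin d → ℝ) (v : Fin d → ℝ) :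
    matVec M (-v) = -matVec M v := by
  funext j; simp [matVec]

lemma matVec_sum_vec (M : Fin d → Fin d → ℝ) (f : ℕ → Fin d → ℝ) (n : ℕ) :
    matVec M (∑ l ∈ Finset.range n, f l) = ∑ l ∈ Finset.range n, matVec M (f l) := by
  funext j
  simp only [matVec, Finset.sum_apply, Finset.mul_sum]
  rw [Finset.sum_comm]

lemma dualMat_bddAbove (hN : IsNorm N) (hu : ∃ v : Fin d → ℝ, N v = 1)
    (M : Fin d → Fin d → ℝ) :
    BddAbove {r | ∃ v : Fin d → ℝ, N v = 1 ∧ r = dualVec N (matVec M v)} := by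
  obtain ⟨C, hC0, hC⟩ := exists_component_bound hN
  refine ⟨∑ j, (∑ k, |M j k| * C) * C, ?_⟩
  rintro r ⟨v, hv, rfl⟩
  refine dualVec_le hu fun u hu1 => ?_
  refine Finset.sum_le_sum fun j _ => ?_
  have hub : |u j| ≤ C := by simpa [hu1] using hC u j
  have hvb : ∀ k, |v k| ≤ C := fun k => by simpa [hv] using hC v k
  have h1 : |matVec M v j| ≤ ∑ k, |M j k| * C := by
    calc |matVec M v j| ≤ ∑ k, |M j k * v k| := Finset.abs_sum_le_sum_abs _ _
      _ ≤ ∑ k, |M j k| * C := by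
          refine Finset.sum_le_sum fun k _ => ?_
          rw [abs_mul]
          exact mul_le_mul_of_nonneg_left (hvb k) (abs_nonneg _)
  calc matVec M v j * u j ≤ |matVec M v j * u j| := le_abs_self _
    _ = |matVec M v j| * |u j| := abs_mul _ _
    _ ≤ (∑ k, |M j k| * C) * C := by
        refine mul_le_mul h1 hub (abs_nonneg _) ?_
        exact Finset.sum_nonneg fun k _ => mul_nonneg (abs_nonneg _) hC0

lemma le_dualMat (hN : IsNorm N) (hu : ∃ v : Fin d → ℝ, N v = 1)
    {v : Fin d → ℝ} (hv : N v = 1) (M : Fin d → Fin d → ℝ) :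
    dualVec N (matVec M v) ≤ dualMat N M :=
  le_csSup (dualMat_bddAbove hN hu M) ⟨v, hv, rfl⟩

lemma dualMat_le (hu : ∃ v : Fin d → ℝ, N v = 1) {M : Fin d → Fin d → ℝ} {B : ℝ}
    (h : ∀ v : Fin d → ℝ, N v = 1 → dualVec N (matVec M v) ≤ B) : dualMat N M ≤ B := by
  obtain ⟨v, hv⟩ := hu
  exact csSup_le ⟨_, v, hv, rfl⟩ (by rintro r ⟨v, hv, rfl⟩; exact h v hv)

lemma dualMat_nonneg (hN : IsNorm N) (hu : ∃ v : Fin d → ℝ, N v = 1)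
    (M : Fin d → Fin d → ℝ) : 0 ≤ dualMat N M := by
  obtain ⟨v, hv⟩ := hu
  exact le_trans (dualVec_nonneg hN ⟨v, hv⟩ _) (le_dualMat hN ⟨v, hv⟩ hv M)

lemma dualMat_zero (hN : IsNorm N) (hu : ∃ v : Fin d → ℝ, N v = 1) :
    dualMat N (0 : Fin d → Fin d → ℝ) = 0 := by
  refine le_antisymm (dualMat_le hu fun v hv => ?_) (dualMat_nonneg hN hu 0)
  rw [matVec_zero_mat, dualVec_zero hN hu]

lemma matVec_le_dualMat (hN : IsNorm N) (hu : ∃ v : Fin d → ℝ, N v = 1)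
    (M : Fin d → Fin d → ℝ) (v : Fin d → ℝ) :
    dualVec N (matVec M v) ≤ dualMat N M * N v := by
  by_cases hv : v = 0
  · simp [hv, matVec_zero_vec, dualVec_zero hN hu, norm_zero' hN]
  · have hNv : 0 < N v := by
      rcases lt_or_eq_of_le (hN.1 v) with h | h
      · exact h
      · exact absurd ((hN.2.1 v).mp h.symm) hv
    have hu1 : N ((N v)⁻¹ • v) = 1 := by
      rw [hN.2.2.1, abs_of_pos (inv_pos.mpr hNv)]; field_simp
    have h1 := le_dualMat hN hu hu1 M
    rw [matVec_smul_vec, dualVec_smul hN hu (inv_pos.mpr hNv)] at h1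
    have h3 := mul_le_mul_of_nonneg_left h1 hNv.le
    calc dualVec N (matVec M v) = N v * ((N v)⁻¹ * dualVec N (matVec M v)) := by field_simp
      _ ≤ N v * dualMat N M := h3
      _ = dualMat N M * N v := mul_comm _ _

lemma dualMat_neg (hN : IsNorm N) (hu : ∃ v : Fin d → ℝ, N v = 1)
    (M : Fin d → Fin d → ℝ) : dualMat N (-M) = dualMat N M := by
  have key : ∀ M' : Fin d → Fin d → ℝ, dualMat N (-M') ≤ dualMat N M' := by
    intro M'
    refine dualMat_le hu fun v hv => ?_
    rw [matVec_neg_mat, dualVec_neg hN hu]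
    exact le_dualMat hN hu hv M'
  refine le_antisymm (key M) ?_
  have := key (-M)
  rwa [neg_neg] at this

lemma dualMat_add_le (hN : IsNorm N) (hu : ∃ v : Fin d → ℝ, N v = 1)
    (M₁ M₂ : Fin d → Fin d → ℝ) :
    dualMat N (M₁ + M₂) ≤ dualMat N M₁ + dualMat N M₂ := by
  refine dualMat_le hu fun v hv => ?_
  have h1 : matVec (M₁ + M₂) v = matVec M₁ v + matVec M₂ v := by
    funext j; simp [matVec, add_mul, Finset.sum_add_distrib]
  rw [h1]
  exact le_trans (dualVec_add_le hN hu _ _)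
    (add_le_add (le_dualMat hN hu hv M₁) (le_dualMat hN hu hv M₂))

lemma dualMat_smul_le (hN : IsNorm N) (hu : ∃ v : Fin d → ℝ, N v = 1) {c : ℝ} (hc : 0 ≤ c)
    (M : Fin d → Fin d → ℝ) : dualMat N (c • M) ≤ c * dualMat N M := by
  refine dualMat_le hu fun v hv => ?_
  rw [matVec_smul_mat]
  exact le_trans (dualVec_smul_le hN hu hc _)
    (mul_le_mul_of_nonneg_left (le_dualMat hN hu hv M) hc)

lemma dualMat_sum_le (hN : IsNorm N) (hu : ∃ v : Fin d → ℝ, N v = 1)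
    (f : ℕ → Fin d → Fin d → ℝ) (n : ℕ) :
    dualMat N (∑ l ∈ Finset.range n, f l) ≤ ∑ l ∈ Finset.range n, dualMat N (f l) := by
  induction n with
  | zero => simp [dualMat_zero hN hu]
  | succ n ih =>
      rw [Finset.sum_range_succ, Finset.sum_range_succ]
      exact le_trans (dualMat_add_le hN hu _ _) (by linarith)

lemma abs_diag_le_dualMat (hN : IsNorm N) (hu : ∃ v : Fin d → ℝ, N v = 1)
    (M : Fin d → Fin d → ℝ) (j : Fin d) :
    |M j j| ≤ dualMat N M * N (Pi.single j 1) * N (Pi.single j 1) := by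
  set e : Fin d → ℝ := (Pi.single j 1 : Fin d → ℝ) with he
  have h1 : matVec M e j = M j j := by
    simp [matVec, he, Pi.single_apply, mul_ite, Finset.sum_ite_eq]
  have h2 : |∑ i, matVec M e i * e i| = |M j j| := by
    have : ∑ i, matVec M e i * e i = M j j := by
      rw [← h1]
      simp [he, Pi.single_apply, mul_ite, Finset.sum_ite_eq]
    rw [this]
  have h3 := abs_inner_le_dualVec hN (matVec M e) e
  rw [h2] at h3
  have h4 := matVec_le_dualMat hN hu M e
  calc |M j j| ≤ dualVec N (matVec M e) * N e := h3
    _ ≤ dualMat N M * N e * N e :=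
        mul_le_mul_of_nonneg_right h4 (hN.1 _)

end MatVec
section Path

variable {d : ℕ} {N : (Fin d → ℝ) → ℝ}

lemma half_sq_sum (δ : ℕ → ℝ) (L : ℕ) :
    ∑ l ∈ Finset.range L, ((1/2) * δ l ^ 2 + (∑ m ∈ Finset.range l, δ m) * δ l) =
      (1/2) * (∑ l ∈ Finset.range L, δ l) ^ 2 := by
  induction L with
  | zero => simp
  | succ n ih =>
      rw [Finset.sum_range_succ, ih, Finset.sum_range_succ (f := δ)]
      ring

lemma path_vec (hN : IsNorm N) (hu : ∃ v : Fin d → ℝ, N v = 1)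
    (Gv : (Fin d → ℝ) → Fin d → ℝ) (L : ℕ) (z : ℕ → Fin d → ℝ)
    (hedge : ∀ l < L, dualVec N (Gv (z l) - Gv (z (l+1))) ≤ N (z l - z (l+1))) :
    dualVec N (Gv (z 0) - Gv (z L)) ≤ ∑ l ∈ Finset.range L, N (z l - z (l+1)) := by
  have h1 : Gv (z 0) - Gv (z L) = ∑ l ∈ Finset.range L, (Gv (z l) - Gv (z (l+1))) := by
    rw [Finset.sum_range_sub' (fun l => Gv (z l)) L]
  rw [h1]
  refine le_trans (dualVec_sum_le hN hu _ _) (Finset.sum_le_sum fun l hl => ?_)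
  exact hedge l (Finset.mem_range.mp hl)

lemma path_mat (hN : IsNorm N) (hu : ∃ v : Fin d → ℝ, N v = 1)
    (Gm : (Fin d → ℝ) → Fin d → Fin d → ℝ) (L : ℕ) (z : ℕ → Fin d → ℝ)
    (hedge : ∀ l < L, dualMat N (Gm (z l) - Gm (z (l+1))) ≤ N (z l - z (l+1))) :
    dualMat N (Gm (z 0) - Gm (z L)) ≤ ∑ l ∈ Finset.range L, N (z l - z (l+1)) := by
  have h1 : Gm (z 0) - Gm (z L) = ∑ l ∈ Finset.range L, (Gm (z l) - Gm (z (l+1))) := by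
    rw [Finset.sum_range_sub' (fun l => Gm (z l)) L]
  rw [h1]
  refine le_trans (dualMat_sum_le hN hu _ _) (Finset.sum_le_sum fun l hl => ?_)
  exact hedge l (Finset.mem_range.mp hl)

lemma path_taylor (hN : IsNorm N) (hu : ∃ v : Fin d → ℝ, N v = 1)
    (Gv : (Fin d → ℝ) → Fin d → ℝ) (Gm : (Fin d → ℝ) → Fin d → Fin d → ℝ)
    (L : ℕ) (z : ℕ → Fin d → ℝ)
    (hedge : ∀ l < L,
      dualMat N (Gm (z l) - Gm (z (l+1))) ≤ N (z l - z (l+1)) ∧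
      dualVec N (Gv (z l) - Gv (z (l+1)) - matVec (Gm (z l)) (z l - z (l+1))) ≤
        (1/2) * N (z l - z (l+1)) ^ 2) :
    dualVec N (Gv (z 0) - Gv (z L) - matVec (Gm (z 0)) (z 0 - z L)) ≤
      (1/2) * (∑ l ∈ Finset.range L, N (z l - z (l+1))) ^ 2 := by
  set δ : ℕ → ℝ := fun l => N (z l - z (l+1)) with hδ
  have key : Gv (z 0) - Gv (z L) - matVec (Gm (z 0)) (z 0 - z L) =
      ∑ l ∈ Finset.range L,
        ((Gv (z l) - Gv (z (l+1)) - matVec (Gm (z l)) (z l - z (l+1))) +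
          matVec (Gm (z l) - Gm (z 0)) (z l - z (l+1))) := by
    have h1 : ∀ l, (Gv (z l) - Gv (z (l+1)) - matVec (Gm (z l)) (z l - z (l+1))) +
        matVec (Gm (z l) - Gm (z 0)) (z l - z (l+1)) =
        (Gv (z l) - Gv (z (l+1))) - matVec (Gm (z 0)) (z l - z (l+1)) := by
      intro l
      rw [matVec_sub_mat]
      abel
    calc Gv (z 0) - Gv (z L) - matVec (Gm (z 0)) (z 0 - z L)
        = (∑ l ∈ Finset.range L, (Gv (z l) - Gv (z (l+1)))) -
            matVec (Gm (z 0)) (∑ l ∈ Finset.range L, (z l - z (l+1))) := by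
          rw [Finset.sum_range_sub' (fun l => Gv (z l)) L,
            Finset.sum_range_sub' (fun l => z l) L]
      _ = ∑ l ∈ Finset.range L,
            ((Gv (z l) - Gv (z (l+1))) - matVec (Gm (z 0)) (z l - z (l+1))) := by
          rw [matVec_sum_vec, ← Finset.sum_sub_distrib]
      _ = _ := by
          exact (Finset.sum_congr rfl fun l _ => (h1 l).symm)
  rw [key]
  calc dualVec N _ ≤ ∑ l ∈ Finset.range L, dualVec N
        ((Gv (z l) - Gv (z (l+1)) - matVec (Gm (z l)) (z l - z (l+1))) +
          matVec (Gm (z l) - Gm (z 0)) (z l - z (l+1))) := dualVec_sum_le hN hu _ _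
    _ ≤ ∑ l ∈ Finset.range L, ((1/2) * δ l ^ 2 + (∑ m ∈ Finset.range l, δ m) * δ l) := by
        refine Finset.sum_le_sum fun l hl => ?_
        have hlL := Finset.mem_range.mp hl
        have hA := (hedge l hlL).2
        have hB : dualMat N (Gm (z l) - Gm (z 0)) ≤ ∑ m ∈ Finset.range l, δ m := by
          have h0 : dualMat N (Gm (z 0) - Gm (z l)) ≤ ∑ m ∈ Finset.range l, δ m :=
            path_mat hN hu Gm l z (fun m hm => (hedge m (lt_trans hm hlL)).1)
          have hneg : Gm (z l) - Gm (z 0) = -(Gm (z 0) - Gm (z l)) := by abel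
          rw [hneg, dualMat_neg hN hu]
          exact h0
        have hC : dualVec N (matVec (Gm (z l) - Gm (z 0)) (z l - z (l+1))) ≤
            (∑ m ∈ Finset.range l, δ m) * δ l := by
          refine le_trans (matVec_le_dualMat hN hu _ _) ?_
          refine mul_le_mul_of_nonneg_right hB (hN.1 _)
        exact le_trans (dualVec_add_le hN hu _ _) (add_le_add hA hC)
    _ = (1/2) * (∑ l ∈ Finset.range L, δ l) ^ 2 := half_sq_sum δ L

end Path
section Grad

variable {d : ℕ} {N : (Fin d → ℝ) → ℝ}

lemma dualVec_zero_any (hN : IsNorm N) : dualVec N (0 : Fin d → ℝ) = 0 := by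
  by_cases hu : ∃ v : Fin d → ℝ, N v = 1
  · exact dualVec_zero hN hu
  · have hempty : {r | ∃ v : Fin d → ℝ, N v = 1 ∧ r = ∑ i, (0:Fin d → ℝ) i * v i} = ∅ := by
      ext r
      simp only [Set.mem_setOf_eq, Set.mem_empty_iff_false, iff_false]
      rintro ⟨v, hv, -⟩
      exact hu ⟨v, hv⟩
    rw [dualVec, hempty, Real.sSup_empty]

lemma dualMat_zero_any (hN : IsNorm N) : dualMat N (0 : Fin d → Fin d → ℝ) = 0 := by
  by_cases hu : ∃ v : Fin d → ℝ, N v = 1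
  · exact dualMat_zero hN hu
  · have hempty : {r | ∃ v : Fin d → ℝ, N v = 1 ∧
        r = dualVec N (matVec (0 : Fin d → Fin d → ℝ) v)} = ∅ := by
      ext r
      simp only [Set.mem_setOf_eq, Set.mem_empty_iff_false, iff_false]
      rintro ⟨v, hv, -⟩
      exact hu ⟨v, hv⟩
    rw [dualMat, hempty, Real.sSup_empty]

lemma diff_apply' {g : (Fin d → ℝ) → Fin d → ℝ} {x : Fin d → ℝ}
    (hg : DifferentiableAt ℝ g x) (j : Fin d) :
    DifferentiableAt ℝ (fun y => g y j) x := by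
  have h := ((ContinuousLinearMap.proj (R := ℝ) (φ := fun _ : Fin d => ℝ)
    j).differentiableAt (x := g x)).comp x hg
  exact h

lemma gradMat_zero_fun (x : Fin d → ℝ) :
    gradMat (fun _ => (0 : Fin d → ℝ)) x = 0 := by
  funext j k
  simp [gradMat]

lemma gradMat_smul {g : (Fin d → ℝ) → Fin d → ℝ} {x : Fin d → ℝ}
    (hg : DifferentiableAt ℝ g x) (c : ℝ) :
    gradMat (fun y => c • g y) x = c • gradMat g x := by
  funext j k
  have hgj := diff_apply' hg j
  have h1 : (fun y => (c • g y) j) = fun y => c * g y j := by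
    funext y; simp
  simp only [gradMat, h1, Pi.smul_apply, smul_eq_mul]
  rw [fderiv_const_mul hgj c]
  simp

lemma steinOp_zero (p : (Fin d → ℝ) → ℝ) (x : Fin d → ℝ) :
    steinOp p (fun _ => (0 : Fin d → ℝ)) x = 0 := by
  simp [steinOp, gradMat_zero_fun]

lemma steinOp_smul (p : (Fin d → ℝ) → ℝ) {g : (Fin d → ℝ) → Fin d → ℝ}
    (hg : ∀ x, DifferentiableAt ℝ g x) (c : ℝ) (x : Fin d → ℝ) :
    steinOp p (fun y => c • g y) x = c * steinOp p g x := by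
  simp only [steinOp, gradMat_smul (hg x) c, Pi.smul_apply, smul_eq_mul]
  rw [mul_add, Finset.mul_sum, Finset.mul_sum]
  congr 1
  exact Finset.sum_congr rfl fun j _ => by ring

lemma zero_mem_graphSteinSet (hN : IsNorm N) (V : Finset (Fin d → ℝ))
    (E' : Set ((Fin d → ℝ) × (Fin d → ℝ))) :
    (fun _ => (0 : Fin d → ℝ)) ∈ graphSteinSet N V E' := by
  refine ⟨fun x => differentiableAt_const _, fun x hx => ?_, fun e he => ?_⟩
  · constructor
    · rw [dualVec_zero_any hN]; norm_num
    · rw [gradMat_zero_fun, dualMat_zero_any hN]; norm_num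
  · have hsq : (0:ℝ) ≤ (1/2) * N (e.1 - e.2) ^ 2 :=
      mul_nonneg (by norm_num) (sq_nonneg _)
    refine ⟨?_, ?_, ?_, ?_⟩
    · simpa [dualVec_zero_any hN] using hN.1 (e.1 - e.2)
    · simpa [gradMat_zero_fun, dualMat_zero_any hN] using hN.1 (e.1 - e.2)
    · simpa [gradMat_zero_fun, matVec_zero_mat, dualVec_zero_any hN] using hsq
    · simpa [gradMat_zero_fun, matVec_zero_mat, dualVec_zero_any hN] using hsq

lemma steinOp_abs_le (hN : IsNorm N) (hu : ∃ v : Fin d → ℝ, N v = 1)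
    (p : (Fin d → ℝ) → ℝ) (g : (Fin d → ℝ) → Fin d → ℝ) (x : Fin d → ℝ)
    (h1 : dualVec N (g x) ≤ 1) (h2 : dualMat N (gradMat g x) ≤ 1) :
    |steinOp p g x| ≤ N (gradLog p x) + ∑ j, N (Pi.single j 1) ^ 2 := by
  have hA : |∑ j, g x j * gradLog p x j| ≤ N (gradLog p x) := by
    refine le_trans (abs_inner_le_dualVec hN _ _) ?_
    calc dualVec N (g x) * N (gradLog p x) ≤ 1 * N (gradLog p x) :=
          mul_le_mul_of_nonneg_right h1 (hN.1 _)
      _ = N (gradLog p x) := one_mul _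
  have hB : |∑ j, gradMat g x j j| ≤ ∑ j, N (Pi.single j 1) ^ 2 := by
    refine le_trans (Finset.abs_sum_le_sum_abs _ _) (Finset.sum_le_sum fun j _ => ?_)
    refine le_trans (abs_diag_le_dualMat hN hu (gradMat g x) j) ?_
    have hnn : 0 ≤ N (Pi.single j 1 : Fin d → ℝ) := hN.1 _
    calc dualMat N (gradMat g x) * N (Pi.single j 1) * N (Pi.single j 1)
        ≤ 1 * N (Pi.single j 1) * N (Pi.single j 1) := by
          refine mul_le_mul_of_nonneg_right (mul_le_mul_of_nonneg_right h2 hnn) hnn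
      _ = N (Pi.single j 1) ^ 2 := by ring
  calc |steinOp p g x| ≤ |∑ j, g x j * gradLog p x j| + |∑ j, gradMat g x j j| :=
        abs_add_le _ _
    _ ≤ N (gradLog p x) + ∑ j, N (Pi.single j 1) ^ 2 := add_le_add hA hB

lemma values_bddAbove (hN : IsNorm N) (hu : ∃ v : Fin d → ℝ, N v = 1)
    (p : (Fin d → ℝ) → ℝ) (S : Finset (Fin d → ℝ)) (q : (Fin d → ℝ) → ℝ)
    (hq0 : ∀ x ∈ S, 0 ≤ q x) (E' : Set ((Fin d → ℝ) × (Fin d → ℝ))) :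
    BddAbove {r | ∃ g ∈ graphSteinSet N S E',
      r = |∑ x ∈ S, q x * steinOp p g x|} := by
  refine ⟨∑ x ∈ S, q x * (N (gradLog p x) + ∑ j, N (Pi.single j 1) ^ 2), ?_⟩
  rintro r ⟨g, hg, rfl⟩
  calc |∑ x ∈ S, q x * steinOp p g x| ≤ ∑ x ∈ S, |q x * steinOp p g x| :=
        Finset.abs_sum_le_sum_abs _ _
    _ ≤ ∑ x ∈ S, q x * (N (gradLog p x) + ∑ j, N (Pi.single j 1) ^ 2) := by
        refine Finset.sum_le_sum fun x hx => ?_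
        rw [abs_mul, abs_of_nonneg (hq0 x hx)]
        refine mul_le_mul_of_nonneg_left ?_ (hq0 x hx)
        exact steinOp_abs_le hN hu p g x (hg.2.1 x hx).1 (hg.2.1 x hx).2

end Grad
section Main

variable {d : ℕ} {N : (Fin d → ℝ) → ℝ}

lemma complete_subset_graphSteinSet (hN : IsNorm N) (S : Finset (Fin d → ℝ))
    (E : Set ((Fin d → ℝ) × (Fin d → ℝ))) (hE1 : ∀ e ∈ E, e.1 ∈ S ∧ e.2 ∈ S) :
    graphSteinSet N S {e | e.1 ∈ S ∧ e.2 ∈ S ∧ e.1 ≠ e.2} ⊆ graphSteinSet N S E := by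
  rintro g ⟨hg1, hg2, hg3⟩
  refine ⟨hg1, hg2, fun e he => ?_⟩
  by_cases heq : e.1 = e.2
  · have hz1 : g e.1 - g e.2 = 0 := by rw [heq, sub_self]
    have hz2 : gradMat g e.1 - gradMat g e.2 = 0 := by rw [heq, sub_self]
    have hz3 : e.1 - e.2 = 0 := by rw [heq, sub_self]
    have hsq : (0:ℝ) ≤ (1/2) * N (e.1 - e.2) ^ 2 :=
      mul_nonneg (by norm_num) (sq_nonneg _)
    refine ⟨?_, ?_, ?_, ?_⟩
    · rw [hz1, dualVec_zero_any hN]; exact hN.1 _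
    · rw [hz2, dualMat_zero_any hN]; exact hN.1 _
    · rw [hz3, matVec_zero_vec]
      have h0 : g e.1 - g e.2 - 0 = 0 := by rw [hz1, sub_zero]
      rw [h0, dualVec_zero_any hN]
      exact mul_nonneg (by norm_num) (sq_nonneg _)
    · rw [hz3, matVec_zero_vec]
      have h0 : g e.1 - g e.2 - 0 = 0 := by rw [hz1, sub_zero]
      rw [h0, dualVec_zero_any hN]
      exact mul_nonneg (by norm_num) (sq_nonneg _)
  · exact hg3 e ⟨(hE1 e he).1, (hE1 e he).2, heq⟩

lemma spanner_pair_bounds (hN : IsNorm N) (hu : ∃ v : Fin d → ℝ, N v = 1)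
    {S : Finset (Fin d → ℝ)} {E : Set ((Fin d → ℝ) × (Fin d → ℝ))} {t : ℝ}
    (hE : IsSpanner N S E t) {g : (Fin d → ℝ) → Fin d → ℝ}
    (hg : g ∈ graphSteinSet N S E) {x y : Fin d → ℝ}
    (hx : x ∈ S) (hy : y ∈ S) (hxy : x ≠ y) :
    dualVec N (g x - g y) ≤ t * N (x - y) ∧
    dualMat N (gradMat g x - gradMat g y) ≤ t * N (x - y) ∧
    dualVec N (g x - g y - matVec (gradMat g x) (x - y)) ≤ (1/2) * (t * N (x - y)) ^ 2 ∧
    dualVec N (g x - g y - matVec (gradMat g y) (x - y)) ≤ (1/2) * (t * N (x - y)) ^ 2 := by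
  -- symmetrized edge conditions
  have hpair : ∀ a b : Fin d → ℝ, (a, b) ∈ E →
      (dualVec N (g a - g b) ≤ N (a - b) ∧
       dualMat N (gradMat g a - gradMat g b) ≤ N (a - b) ∧
       dualVec N (g a - g b - matVec (gradMat g a) (a - b)) ≤ (1/2) * N (a - b) ^ 2) ∧
      (dualVec N (g b - g a) ≤ N (b - a) ∧
       dualMat N (gradMat g b - gradMat g a) ≤ N (b - a) ∧
       dualVec N (g b - g a - matVec (gradMat g b) (b - a)) ≤ (1/2) * N (b - a) ^ 2) := by
    intro a b hab
    obtain ⟨c1, c2, c3, c4⟩ := hg.2.2 (a, b) hab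
    refine ⟨⟨c1, c2, c3⟩, ?_, ?_, ?_⟩
    · have h1 : g b - g a = -(g a - g b) := by abel
      rw [h1, dualVec_neg hN hu, norm_sub_rev' hN b a]
      exact c1
    · have h1 : gradMat g b - gradMat g a = -(gradMat g a - gradMat g b) := by abel
      rw [h1, dualMat_neg hN hu, norm_sub_rev' hN b a]
      exact c2
    · have h1 : g b - g a - matVec (gradMat g b) (b - a) =
          -(g a - g b - matVec (gradMat g b) (a - b)) := by
        have h2 : b - a = -(a - b) := by abel
        rw [h2, matVec_neg_vec]
        abel
      rw [h1, dualVec_neg hN hu, norm_sub_rev' hN b a]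
      exact c4
  obtain ⟨L, z, hz0, hzL, hzE, hlen⟩ := hE.2 x hx y hy hxy
  set D : ℝ := ∑ l ∈ Finset.range L, N (z l - z (l + 1)) with hD
  have hD0 : 0 ≤ D := Finset.sum_nonneg fun l _ => hN.1 _
  have htN0 : 0 ≤ t * N (x - y) := le_trans hD0 hlen
  have hDsq : (1/2) * D ^ 2 ≤ (1/2) * (t * N (x - y)) ^ 2 := by nlinarith
  -- forward bounds
  have h1 : dualVec N (g x - g y) ≤ t * N (x - y) := by
    have := path_vec hN hu g L z (fun l hl => ((hpair _ _ (hzE l hl)).1).1)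
    rw [hz0, hzL] at this
    exact le_trans this hlen
  have h2 : dualMat N (gradMat g x - gradMat g y) ≤ t * N (x - y) := by
    have := path_mat hN hu (gradMat g) L z (fun l hl => ((hpair _ _ (hzE l hl)).1).2.1)
    rw [hz0, hzL] at this
    exact le_trans this hlen
  have h3 : dualVec N (g x - g y - matVec (gradMat g x) (x - y)) ≤
      (1/2) * (t * N (x - y)) ^ 2 := by
    have := path_taylor hN hu g (gradMat g) L z
      (fun l hl => ⟨((hpair _ _ (hzE l hl)).1).2.1, ((hpair _ _ (hzE l hl)).1).2.2⟩)
    rw [hz0, hzL] at this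
    exact le_trans this hDsq
  -- reversed path
  have h4 : dualVec N (g x - g y - matVec (gradMat g y) (x - y)) ≤
      (1/2) * (t * N (x - y)) ^ 2 := by
    set z' : ℕ → Fin d → ℝ := fun l => z (L - l) with hz'
    have hL0 : 0 < L := by
      rcases Nat.eq_zero_or_pos L with h | h
      · exfalso; apply hxy; rw [← hz0, ← hzL, h]
      · exact h
    have hedge' : ∀ l < L,
        dualMat N (gradMat g (z' l) - gradMat g (z' (l+1))) ≤ N (z' l - z' (l+1)) ∧
        dualVec N (g (z' l) - g (z' (l+1)) - matVec (gradMat g (z' l)) (z' l - z' (l+1)))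
          ≤ (1/2) * N (z' l - z' (l+1)) ^ 2 := by
      intro l hl
      have hm : L - l - 1 < L := by omega
      have hi1 : (L - l - 1) + 1 = L - l := by omega
      have hi2 : L - (l + 1) = L - l - 1 := by omega
      have he1 : z' l = z ((L - l - 1) + 1) := by
        simp only [hz']; rw [hi1]
      have he2 : z' (l + 1) = z (L - l - 1) := by
        simp only [hz']; rw [hi2]
      have := (hpair _ _ (hzE (L - l - 1) hm)).2
      rw [he1, he2]
      exact ⟨this.2.1, this.2.2⟩
    have hres := path_taylor hN hu g (gradMat g) L z' hedge'
    have hz'0 : z' 0 = y := by simp only [hz']; rw [Nat.sub_zero, hzL]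
    have hz'L : z' L = x := by simp only [hz']; rw [Nat.sub_self, hz0]
    rw [hz'0, hz'L] at hres
    have hD' : ∑ l ∈ Finset.range L, N (z' l - z' (l + 1)) = D := by
      rw [hD, ← Finset.sum_range_reflect (fun m => N (z m - z (m + 1))) L]
      refine Finset.sum_congr rfl fun l hl => ?_
      have hlL := Finset.mem_range.mp hl
      have hi1 : L - 1 - l + 1 = L - l := by omega
      have hi2 : L - (l + 1) = L - 1 - l := by omega
      have he1 : z' l = z (L - 1 - l + 1) := by
        simp only [hz']; rw [hi1]
      have he2 : z' (l + 1) = z (L - 1 - l) := by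
        simp only [hz']; rw [hi2]
      rw [he1, he2, norm_sub_rev' hN]
    rw [hD'] at hres
    have hflip : g y - g x - matVec (gradMat g y) (y - x) =
        -(g x - g y - matVec (gradMat g y) (x - y)) := by
      have h2' : y - x = -(x - y) := by abel
      rw [h2', matVec_neg_vec]
      abel
    rw [hflip, dualVec_neg hN hu] at hres
    exact le_trans hres hDsq
  exact ⟨h1, h2, h3, h4⟩

end Main

/-- Proposition 6: equivalence of spanner and complete graph Stein
discrepancies. -/
theorem spanner_completeGraph_equiv {d : ℕ} (N : (Fin d → ℝ) → ℝ) (hN : IsNorm N)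
    (p : (Fin d → ℝ) → ℝ) (hppos : ∀ x, 0 < p x) (hpC1 : ContDiff ℝ 1 p)
    (S : Finset (Fin d → ℝ)) (q : (Fin d → ℝ) → ℝ)
    (hq0 : ∀ x ∈ S, 0 ≤ q x) (hq1 : ∑ x ∈ S, q x = 1)
    (t : ℝ) (ht : 1 ≤ t) (E : Set ((Fin d → ℝ) × (Fin d → ℝ)))
    (hE : IsSpanner N S E t) :
    steinDiscr N p S q (graphSteinSet N S {e | e.1 ∈ S ∧ e.2 ∈ S ∧ e.1 ≠ e.2}) ≤
        steinDiscr N p S q (graphSteinSet N S E) ∧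
      steinDiscr N p S q (graphSteinSet N S E) ≤
        2 * t ^ 2 *
          steinDiscr N p S q (graphSteinSet N S {e | e.1 ∈ S ∧ e.2 ∈ S ∧ e.1 ≠ e.2}) := by
  classical
  rcases isEmpty_or_nonempty (Fin d) with hd | hd
  · -- degenerate case `d = 0`
    have hzero : ∀ (g : (Fin d → ℝ) → Fin d → ℝ) (x : Fin d → ℝ), steinOp p g x = 0 := by
      intro g x; simp [steinOp]
    have hdiscr : ∀ E' : Set ((Fin d → ℝ) × (Fin d → ℝ)),
        steinDiscr N p S q (graphSteinSet N S E') = 0 := by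
      intro E'
      have hval : {r | ∃ g ∈ graphSteinSet N S E',
          r = |∑ x ∈ S, q x * steinOp p g x|} = {(0:ℝ)} := by
        ext r
        simp only [Set.mem_setOf_eq, Set.mem_singleton_iff]
        constructor
        · rintro ⟨g, hg, rfl⟩; simp [hzero]
        · rintro rfl
          exact ⟨_, zero_mem_graphSteinSet hN S E', by simp [hzero]⟩
      rw [steinDiscr, hval, csSup_singleton]
    rw [hdiscr, hdiscr]
    norm_num
  · have hu : ∃ v : Fin d → ℝ, N v = 1 := exists_unit hN
    have hbddC := values_bddAbove hN hu p S q hq0 {e | e.1 ∈ S ∧ e.2 ∈ S ∧ e.1 ≠ e.2}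
    have hbddE := values_bddAbove hN hu p S q hq0 E
    have hsum0 : (0:ℝ) = |∑ x ∈ S, q x * steinOp p (fun _ => (0 : Fin d → ℝ)) x| := by
      simp [steinOp_zero]
    have h0C : (0:ℝ) ∈ {r | ∃ g ∈ graphSteinSet N S
        {e : (Fin d → ℝ) × (Fin d → ℝ) | e.1 ∈ S ∧ e.2 ∈ S ∧ e.1 ≠ e.2},
        r = |∑ x ∈ S, q x * steinOp p g x|} :=
      ⟨_, zero_mem_graphSteinSet hN S _, hsum0⟩
    have h0E : (0:ℝ) ∈ {r | ∃ g ∈ graphSteinSet N S E,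
        r = |∑ x ∈ S, q x * steinOp p g x|} :=
      ⟨_, zero_mem_graphSteinSet hN S _, hsum0⟩
    constructor
    · -- first inequality
      rw [steinDiscr, steinDiscr]
      refine csSup_le_csSup hbddE ⟨0, h0C⟩ ?_
      rintro r ⟨g, hg, rfl⟩
      exact ⟨g, complete_subset_graphSteinSet hN S E hE.1 hg, rfl⟩
    · -- second inequality
      rw [steinDiscr, steinDiscr]
      refine csSup_le ⟨0, h0E⟩ ?_
      rintro r ⟨g, hg, rfl⟩
      have hgd := hg.1
      have ht0 : (0:ℝ) < t := lt_of_lt_of_le one_pos ht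
      have h2t : (0:ℝ) < 2 * t ^ 2 := by positivity
      set c : ℝ := (2 * t ^ 2)⁻¹ with hcdef
      have hc : 0 < c := inv_pos.mpr h2t
      have hc1 : c ≤ 1 := by
        have h12 : (1:ℝ) ≤ 2 * t ^ 2 := by nlinarith
        calc c = 1 / (2 * t ^ 2) := by rw [hcdef, one_div]
          _ ≤ 1 / 1 := one_div_le_one_div_of_le one_pos h12
          _ = 1 := by norm_num
      have hct : c * t ≤ 1 := by
        rw [hcdef, mul_comm, ← div_eq_mul_inv, div_le_one h2t]
        nlinarith
      have hct2 : ∀ u : ℝ, c * ((1/2) * (t * u) ^ 2) ≤ (1/2) * u ^ 2 := by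
        intro u
        have he : c * ((1/2) * (t * u) ^ 2) = (1/4) * u ^ 2 := by
          rw [hcdef]; field_simp; ring
        rw [he]
        nlinarith [sq_nonneg u]
      set h : (Fin d → ℝ) → Fin d → ℝ := fun y => c • g y with hhdef
      have hgm : ∀ x, gradMat h x = c • gradMat g x := fun x => gradMat_smul (hgd x) c
      have hmem : h ∈ graphSteinSet N S {e | e.1 ∈ S ∧ e.2 ∈ S ∧ e.1 ≠ e.2} := by
        refine ⟨fun x => (hgd x).const_smul c, fun x hx => ?_, fun e he => ?_⟩
        · obtain ⟨hv1, hv2⟩ := hg.2.1 x hx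
          constructor
          · calc dualVec N (h x) = dualVec N (c • g x) := rfl
              _ ≤ c * dualVec N (g x) := dualVec_smul_le hN hu hc.le _
              _ ≤ c * 1 := mul_le_mul_of_nonneg_left hv1 hc.le
              _ ≤ 1 := by rw [mul_one]; exact hc1
          · rw [hgm x]
            calc dualMat N (c • gradMat g x) ≤ c * dualMat N (gradMat g x) :=
                  dualMat_smul_le hN hu hc.le _
              _ ≤ c * 1 := mul_le_mul_of_nonneg_left hv2 hc.le
              _ ≤ 1 := by rw [mul_one]; exact hc1
        · obtain ⟨he1, he2, hne⟩ := he
          obtain ⟨k1, k2, k3, k4⟩ := spanner_pair_bounds hN hu hE hg he1 he2 hne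
          have hu0 : 0 ≤ N (e.1 - e.2) := hN.1 _
          refine ⟨?_, ?_, ?_, ?_⟩
          · have he' : h e.1 - h e.2 = c • (g e.1 - g e.2) := by
              rw [hhdef]; simp only [smul_sub]
            rw [he']
            calc dualVec N (c • (g e.1 - g e.2)) ≤ c * dualVec N (g e.1 - g e.2) :=
                  dualVec_smul_le hN hu hc.le _
              _ ≤ c * (t * N (e.1 - e.2)) := mul_le_mul_of_nonneg_left k1 hc.le
              _ = (c * t) * N (e.1 - e.2) := by ring
              _ ≤ 1 * N (e.1 - e.2) := mul_le_mul_of_nonneg_right hct hu0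
              _ = N (e.1 - e.2) := one_mul _
          · have he' : gradMat h e.1 - gradMat h e.2 =
                c • (gradMat g e.1 - gradMat g e.2) := by
              rw [hgm, hgm, smul_sub]
            rw [he']
            calc dualMat N (c • (gradMat g e.1 - gradMat g e.2)) ≤
                  c * dualMat N (gradMat g e.1 - gradMat g e.2) :=
                  dualMat_smul_le hN hu hc.le _
              _ ≤ c * (t * N (e.1 - e.2)) := mul_le_mul_of_nonneg_left k2 hc.le
              _ = (c * t) * N (e.1 - e.2) := by ring
              _ ≤ 1 * N (e.1 - e.2) := mul_le_mul_of_nonneg_right hct hu0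
              _ = N (e.1 - e.2) := one_mul _
          · have he' : h e.1 - h e.2 - matVec (gradMat h e.1) (e.1 - e.2) =
                c • (g e.1 - g e.2 - matVec (gradMat g e.1) (e.1 - e.2)) := by
              rw [hgm, matVec_smul_mat, hhdef]
              simp only [smul_sub]
            rw [he']
            calc dualVec N (c • (g e.1 - g e.2 - matVec (gradMat g e.1) (e.1 - e.2))) ≤
                  c * dualVec N (g e.1 - g e.2 - matVec (gradMat g e.1) (e.1 - e.2)) :=
                  dualVec_smul_le hN hu hc.le _
              _ ≤ c * ((1/2) * (t * N (e.1 - e.2)) ^ 2) :=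
                  mul_le_mul_of_nonneg_left k3 hc.le
              _ ≤ (1/2) * N (e.1 - e.2) ^ 2 := hct2 _
          · have he' : h e.1 - h e.2 - matVec (gradMat h e.2) (e.1 - e.2) =
                c • (g e.1 - g e.2 - matVec (gradMat g e.2) (e.1 - e.2)) := by
              rw [hgm, matVec_smul_mat, hhdef]
              simp only [smul_sub]
            rw [he']
            calc dualVec N (c • (g e.1 - g e.2 - matVec (gradMat g e.2) (e.1 - e.2))) ≤
                  c * dualVec N (g e.1 - g e.2 - matVec (gradMat g e.2) (e.1 - e.2)) :=
                  dualVec_smul_le hN hu hc.le _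
              _ ≤ c * ((1/2) * (t * N (e.1 - e.2)) ^ 2) :=
                  mul_le_mul_of_nonneg_left k4 hc.le
              _ ≤ (1/2) * N (e.1 - e.2) ^ 2 := hct2 _
      have hsum : ∑ x ∈ S, q x * steinOp p h x = c * ∑ x ∈ S, q x * steinOp p g x := by
        rw [Finset.mul_sum]
        exact Finset.sum_congr rfl fun x _ => by rw [steinOp_smul p hgd c x]; ring
      have hmemval : |∑ x ∈ S, q x * steinOp p h x| ∈
          {r | ∃ g ∈ graphSteinSet N S
            {e : (Fin d → ℝ) × (Fin d → ℝ) | e.1 ∈ S ∧ e.2 ∈ S ∧ e.1 ≠ e.2},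
            r = |∑ x ∈ S, q x * steinOp p g x|} := ⟨h, hmem, rfl⟩
      have hle := le_csSup hbddC hmemval
      have habs : |∑ x ∈ S, q x * steinOp p g x| =
          (2 * t ^ 2) * |∑ x ∈ S, q x * steinOp p h x| := by
        rw [hsum, abs_mul, abs_of_pos hc, hcdef]
        field_simp
      rw [habs]
      exact mul_le_mul_of_nonneg_left hle h2t.le

end Stein
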